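/- arXiv:1605.04372 — 3 statements merged into one kernel-verified Lean document; each statement's English description precedes it below -/
import Mathlib

section
/- Let K be a field and g_1, ..., g_k nonzero polynomials in K[x] with b = gcd(g_1, ..., g_k). Write g_i = b * α_i. If h_1, ..., h_k are polynomials with deg h_i < deg g_i for all i and h_i * g_k = h_k * g_i for all i, then α_i divides h_i for every i; moreover h_i = h' * α_i for a single polynomial h' with deg h' < deg b. -/
open Polynomial

/-- If `b = gcd (g 0, ..., g (k-1))`, `α i = g i / b`, and the `h i` satisfy
`deg h i < deg g i` and `h i * g (k-1) = h (k-1) * g i`, then `α i ∣ h i` for all `i`;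
moreover `h i = h' * α i` for a single `h'` with `deg h' < deg b`. -/
theorem stmt_1 {K : Type*} [Field K] [DecidableEq K] (k : ℕ) (hk : 2 ≤ k)
    (g : Fin k → Polynomial K) (hg0 : ∀ i, g i ≠ 0) (hg : ∀ i, 0 < (g i).degree)
    (b : Polynomial K) (hb : b = Finset.univ.gcd g)
    (α : Fin k → Polynomial K) (hα : ∀ i, α i = g i / b)
    (h : Fin k → Polynomial K) (hdeg : ∀ i, (h i).degree < (g i).degree)
    (hrel : ∀ i, h i * g ⟨k - 1, by omega⟩ = h ⟨k - 1, by omega⟩ * g i) :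
    (∀ i, α i ∣ h i) ∧
      ∃ h' : Polynomial K, h'.degree < b.degree ∧ ∀ i, h i = h' * α i := by
  set n : Fin k := ⟨k - 1, by omega⟩ with hn
  have hb0 : b ≠ 0 := by
    rw [hb, Ne, Finset.gcd_eq_zero_iff]
    intro H
    exact hg0 n (H n (Finset.mem_univ n))
  have hdvd : ∀ i, b ∣ g i := fun i => hb ▸ Finset.gcd_dvd (Finset.mem_univ i)
  have hgα : ∀ i, g i = b * α i := fun i => by
    rw [hα i]; exact (EuclideanDomain.mul_div_cancel' hb0 (hdvd i)).symm
  have hα0 : ∀ i, α i ≠ 0 := fun i hc => hg0 i (by rw [hgα i, hc, mul_zero])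
  have hgcdα : Finset.univ.gcd α = 1 := by
    have h1 : Finset.univ.gcd g = normalize b * Finset.univ.gcd α := by
      rw [show g = fun i => b * α i from funext hgα]
      exact Finset.gcd_mul_left
    have hnb : normalize b = b := by rw [hb]; exact Finset.normalize_gcd
    have h2 : b = b * Finset.univ.gcd α := by
      calc b = Finset.univ.gcd g := hb
        _ = normalize b * Finset.univ.gcd α := h1
        _ = b * Finset.univ.gcd α := by rw [hnb]
    exact (mul_left_cancel₀ hb0 (by rw [mul_one, ← h2])).symm
  obtain ⟨c, hc⟩ : ∃ c : Fin k → Polynomial K, ∑ i, c i * α i = 1 := by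
    rw [← Ideal.mem_span_range_iff_exists_fun]
    obtain ⟨d, hd⟩ := (IsPrincipalIdealRing.principal (Ideal.span (Set.range α)))
    have hdd : ∀ i, d ∣ α i := fun i => Ideal.mem_span_singleton.mp (by
      rw [show Ideal.span {d} = Submodule.span (Polynomial K) {d} from rfl, ← hd]
      exact Ideal.subset_span ⟨i, rfl⟩)
    have : d ∣ (1 : Polynomial K) := hgcdα ▸ Finset.dvd_gcd fun i _ => hdd i
    have htop : Ideal.span (Set.range α) = ⊤ := by
      rw [hd, show Submodule.span (Polynomial K) {d} = Ideal.span {d} from rfl,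
        Ideal.span_singleton_eq_top]
      exact isUnit_of_dvd_one this
    rw [htop]; trivial
  have hrel' : ∀ i, h i * α n = h n * α i := fun i => by
    have h1 := hrel i
    rw [hgα i, hgα n] at h1
    apply mul_left_cancel₀ hb0
    linear_combination h1
  set h' : Polynomial K := ∑ i, c i * h i with hh'
  have hhn : α n * h' = h n := by
    rw [hh', Finset.mul_sum]
    rw [Finset.sum_congr rfl (fun i _ => show α n * (c i * h i) = h n * (c i * α i) by
      linear_combination c i * hrel' i)]
    rw [← Finset.mul_sum, hc, mul_one]
  have heq : ∀ i, h i = h' * α i := fun i => by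
    apply mul_right_cancel₀ (hα0 n)
    linear_combination hrel' i - α i * hhn
  refine ⟨fun i => ⟨h', by rw [heq i, mul_comm]⟩, h', ?_, heq⟩
  by_cases hh0 : h' = 0
  · rw [hh0, Polynomial.degree_zero]
    exact bot_lt_iff_ne_bot.mpr (by simp [Polynomial.degree_eq_bot, hb0])
  · have hhn0 : h n ≠ 0 := by rw [← hhn]; exact mul_ne_zero (hα0 n) hh0
    have h1 : (h n).natDegree < (g n).natDegree :=
      Polynomial.natDegree_lt_natDegree hhn0 (hdeg n)
    have h2 : (g n).natDegree = b.natDegree + (α n).natDegree := by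
      rw [hgα n, Polynomial.natDegree_mul hb0 (hα0 n)]
    have h3 : (h n).natDegree = (α n).natDegree + h'.natDegree := by
      rw [← hhn, Polynomial.natDegree_mul (hα0 n) hh0]
    exact Polynomial.degree_lt_degree (by omega)
end

section
/- Let K be a field of characteristic zero and g_1, ..., g_k nonzero polynomials in K[x]. Let b = gcd(g_1, ..., g_k). Then gcd(b, b') = gcd(g_1, ..., g_k, g_1', ..., g_k'), where ' denotes the formal derivative. -/
open Polynomial

/-- For nonzero polynomials `g i` over a field of characteristic zero, with
`b = gcd (g 0, ..., g (k-1))`, one has `gcd b b' = gcd (g 0, ..., g (k-1), g 0', ..., g (k-1)')`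
up to units. -/
theorem stmt_2 {K : Type*} [Field K] [CharZero K] [DecidableEq K] (k : ℕ)
    (g : Fin k → Polynomial K) (hg : ∀ i, g i ≠ 0)
    (b : Polynomial K) (hb : b = Finset.univ.gcd g) :
    Associated (gcd b (derivative b))
      (gcd (Finset.univ.gcd g) (Finset.univ.gcd fun i => derivative (g i))) := by
  rcases Nat.eq_zero_or_pos k with hk | hk
  · subst hk
    simp [hb]
  have hb0 : b ≠ 0 := by
    rw [hb, Ne, Finset.gcd_eq_zero_iff]
    push_neg
    exact ⟨⟨0, hk⟩, Finset.mem_univ _, hg _⟩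
  set h : Fin k → Polynomial K := fun i => g i / b with hh
  have hgh : ∀ i, g i = b * h i := fun i =>
    (EuclideanDomain.mul_div_cancel' hb0
      (hb ▸ Finset.gcd_dvd (Finset.mem_univ i))).symm
  have hnb : normalize b = b := by rw [hb]; exact Finset.normalize_gcd
  have hgcdh : Finset.univ.gcd h = 1 := by
    have h1 : Finset.univ.gcd g = normalize b * Finset.univ.gcd h := by
      rw [← Finset.gcd_mul_left]
      exact Finset.gcd_congr rfl fun i _ => hgh i
    rw [hnb, ← hb] at h1
    exact mul_left_cancel₀ hb0 (by rw [← h1, mul_one])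
  apply associated_of_dvd_dvd
  · apply dvd_gcd
    · exact (gcd_dvd_left _ _).trans (hb ▸ dvd_rfl)
    · apply Finset.dvd_gcd
      intro i _
      rw [hgh i, derivative_mul]
      exact dvd_add ((gcd_dvd_right _ _).mul_right _) ((gcd_dvd_left _ _).mul_right _)
  · apply dvd_gcd
    · exact (gcd_dvd_left _ _).trans (hb ▸ dvd_rfl)
    · -- show gcd (Finset.univ.gcd g) (Finset.univ.gcd g') ∣ derivative b
      have hd : ∀ i : Fin k,
          gcd (Finset.univ.gcd g) (Finset.univ.gcd fun i => derivative (g i)) ∣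
            derivative b * h i := by
        intro i
        have h1 : gcd (Finset.univ.gcd g) (Finset.univ.gcd fun i => derivative (g i)) ∣
            derivative (g i) :=
          (gcd_dvd_right _ _).trans (Finset.gcd_dvd (Finset.mem_univ i))
        have h2 : gcd (Finset.univ.gcd g) (Finset.univ.gcd fun i => derivative (g i)) ∣
            b * derivative (h i) :=
          ((gcd_dvd_left _ _).trans (hb ▸ dvd_rfl)).trans (dvd_mul_right _ _)
        have : derivative b * h i = derivative (g i) - b * derivative (h i) := by
          rw [hgh i, derivative_mul]; ring
        rw [this]
        exact dvd_sub h1 h2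
      have h3 : gcd (Finset.univ.gcd g) (Finset.univ.gcd fun i => derivative (g i)) ∣
          Finset.univ.gcd fun i => derivative b * h i :=
        Finset.dvd_gcd fun i _ => hd i
      rwa [Finset.gcd_mul_left, hgcdh, mul_one, dvd_normalize_iff] at h3
end

section
/- Let g_1, ..., g_k be nonzero one-variable polynomials over a field K with d_i = deg g_i > 0, and let T_{g_1,...,g_k} be the block matrix of size (d_1 + ... + d_{k−1} + (k−1)d_k) × (d_1 + ... + d_k) built from the coefficient (Sylvester-type) matrices A^i and B^i as in the generalized resultant construction. Then the nullity of T_{g_1,...,g_k} equals deg(gcd(g_1, ..., g_k)). In particular, g_1, ..., g_k have a common root in the algebraic closure of K if and only if T_{g_1,...,g_k} does not have full column rank. -/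
open Polynomial

namespace Stmt14Aux

variable {K : Type*} [Field K]

noncomputable def enc (d : ℕ) (f : Fin d → K) : K[X] :=
  ∑ q : Fin d, C (f q) * X ^ (d - 1 - (q : ℕ))

lemma enc_coeff (d : ℕ) (f : Fin d → K) (q : Fin d) :
    (enc d f).coeff (d - 1 - (q : ℕ)) = f q := by
  rw [enc, finset_sum_coeff, Finset.sum_eq_single q]
  · simp [coeff_C_mul, coeff_X_pow]
  · intro b _ hb
    rw [coeff_C_mul, coeff_X_pow, if_neg, mul_zero]
    have hb1 := b.isLt; have hq1 := q.isLt
    intro h; exact hb (Fin.ext (by omega))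
  · simp

lemma enc_coeff_ge (d : ℕ) (f : Fin d → K) {n : ℕ} (h : d ≤ n) :
    (enc d f).coeff n = 0 := by
  rw [enc, finset_sum_coeff]
  refine Finset.sum_eq_zero fun q _ => ?_
  rw [coeff_C_mul, coeff_X_pow, if_neg (by have := q.isLt; omega), mul_zero]

lemma enc_degree_lt (d : ℕ) (f : Fin d → K) : (enc d f).degree < (d : WithBot ℕ) := by
  rcases Nat.eq_zero_or_pos d with h | h
  · subst h; simp only [enc, Finset.univ_eq_empty, Finset.sum_empty]
    rw [degree_zero]; exact_mod_cast WithBot.bot_lt_coe 0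
  · exact (degree_lt_iff_coeff_zero _ _).2 fun m hm =>
      enc_coeff_ge d f (by exact_mod_cast hm)

lemma enc_coeffs (d : ℕ) (p : K[X]) (hp : p.degree < (d : WithBot ℕ)) :
    enc d (fun q => p.coeff (d - 1 - (q : ℕ))) = p := by
  ext n
  by_cases hn : n < d
  · have hq : d - 1 - ((⟨d - 1 - n, by omega⟩ : Fin d) : ℕ) = n := by simp; omega
    conv_lhs => rw [← hq, enc_coeff]
    rw [hq]
  · rw [enc_coeff_ge d _ (by omega),
      coeff_eq_zero_of_degree_lt (hp.trans_le (by exact_mod_cast by omega))]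

lemma coeff_mul_enc (a : K[X]) (d : ℕ) (f : Fin d → K) (n : ℕ) :
    (a * enc d f).coeff n =
      ∑ q : Fin d,
        (if d - 1 - (q : ℕ) ≤ n then a.coeff (n - (d - 1 - (q : ℕ))) else 0) * f q := by
  rw [enc, Finset.mul_sum, finset_sum_coeff]
  refine Finset.sum_congr rfl fun q _ => ?_
  rw [show a * (C (f q) * X ^ (d - 1 - (q : ℕ))) = a * X ^ (d - 1 - (q : ℕ)) * C (f q) by ring,
    coeff_mul_C, coeff_mul_X_pow']

lemma aeval_gcd_pair {A : Type*} [CommRing A] [Algebra K A] [DecidableEq K] (x : A)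
    (a b : K[X]) (ha : (aeval x) a = 0) (hb : (aeval x) b = 0) :
    (aeval x) (gcd a b) = 0 := by
  obtain ⟨c, hc⟩ : EuclideanDomain.gcd a b ∣ gcd a b :=
    dvd_gcd (EuclideanDomain.gcd_dvd_left a b) (EuclideanDomain.gcd_dvd_right a b)
  rw [hc, map_mul, EuclideanDomain.gcd_eq_gcd_ab a b]
  simp [ha, hb]

lemma aeval_finset_gcd {A : Type*} [CommRing A] [Algebra K A] [DecidableEq K] (x : A)
    {ι : Type*} (s : Finset ι) (f : ι → K[X]) (h : ∀ i ∈ s, (aeval x) (f i) = 0) :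
    (aeval x) (s.gcd f) = 0 := by
  classical
  induction s using Finset.induction_on with
  | empty => simp
  | insert _ _ ha ih =>
    rw [Finset.gcd_insert]
    exact aeval_gcd_pair x _ _ (h _ (Finset.mem_insert_self _ _))
      (ih fun i hi => h i (Finset.mem_insert_of_mem hi))

end Stmt14Aux


open Stmt14Aux

/-- The generalized resultant: for nonzero polynomials `g 0, ..., g m` (with `g (Fin.last m)`
playing the role of `g_k`) of positive degrees, the block matrix `T` built from the
Sylvester-type coefficient blocks `A^i` (in the first block column) and `B^i` (in the
`(i+1)`-st block column) has nullity equal to `deg (gcd (g 0, ..., g m))`; in particular the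
`g i` have a common root in the algebraic closure iff `T` does not have full column rank,
i.e. iff its kernel is nonzero. -/
theorem stmt_14 {K : Type*} [Field K] [DecidableEq K] (m : ℕ) (hm : 0 < m)
    (g : Fin (m + 1) → Polynomial K) (hg : ∀ i, 0 < (g i).natDegree)
    (T : Matrix (Σ i : Fin m, Fin ((g i.castSucc).natDegree + (g (Fin.last m)).natDegree))
      (Fin ((g (Fin.last m)).natDegree) ⊕ Σ i : Fin m, Fin ((g i.castSucc).natDegree)) K)
    (hTA : ∀ (i : Fin m) (p : Fin ((g i.castSucc).natDegree + (g (Fin.last m)).natDegree))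
        (q : Fin ((g (Fin.last m)).natDegree)),
      T ⟨i, p⟩ (Sum.inl q) =
        if (q : ℕ) ≤ (p : ℕ) ∧ (p : ℕ) - (q : ℕ) ≤ (g i.castSucc).natDegree then
          (g i.castSucc).coeff ((g i.castSucc).natDegree - ((p : ℕ) - (q : ℕ)))
        else 0)
    (hTB : ∀ (i : Fin m) (p : Fin ((g i.castSucc).natDegree + (g (Fin.last m)).natDegree))
        (j : Fin m) (q : Fin ((g j.castSucc).natDegree)),
      T ⟨i, p⟩ (Sum.inr ⟨j, q⟩) =
        if i = j ∧ (q : ℕ) ≤ (p : ℕ) ∧ (p : ℕ) - (q : ℕ) ≤ (g (Fin.last m)).natDegree then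
          (g (Fin.last m)).coeff ((g (Fin.last m)).natDegree - ((p : ℕ) - (q : ℕ)))
        else 0) :
    Module.finrank K (LinearMap.ker T.mulVecLin) = (Finset.univ.gcd g).natDegree ∧
      ((∃ x : AlgebraicClosure K, ∀ i, Polynomial.aeval x (g i) = 0) ↔
        LinearMap.ker T.mulVecLin ≠ ⊥) := by
  classical
  have hdk : 0 < (g (Fin.last m)).natDegree := hg _
  have hdi : ∀ i : Fin m, 0 < (g i.castSucc).natDegree := fun i => hg _
  have hgne : ∀ i, g i ≠ 0 := by
    intro i h
    have := hg i
    rw [h, natDegree_zero] at this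
    exact absurd this (lt_irrefl _)
  have hGdvd : ∀ i, ∃ c, g i = Finset.univ.gcd g * c :=
    fun i => Finset.gcd_dvd (Finset.mem_univ i)
  have hG0 : Finset.univ.gcd g ≠ 0 :=
    fun h => hgne (Fin.last m) (Finset.gcd_eq_zero_iff.1 h _ (Finset.mem_univ _))
  choose u hgu using hGdvd
  have hu0 : ∀ i, u i ≠ 0 := by
    intro i h
    exact hgne i (by rw [hgu i, h, mul_zero])
  have hdeg : ∀ i, (g i).natDegree = (Finset.univ.gcd g).natDegree + (u i).natDegree :=
    fun i => by rw [hgu i, natDegree_mul hG0 (hu0 i)]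
  have hgcdu : Finset.univ.gcd u = 1 := by
    have h1 : Finset.univ.gcd (fun i => Finset.univ.gcd g * u i) =
        normalize (Finset.univ.gcd g) * Finset.univ.gcd u := Finset.gcd_mul_left
    rw [Finset.normalize_gcd] at h1
    rw [show (fun i => Finset.univ.gcd g * u i) = g from funext fun i => (hgu i).symm] at h1
    exact mul_left_cancel₀ hG0 (by rw [← h1, mul_one])
  -- row computation
  have rowEq : ∀ (v : (Fin ((g (Fin.last m)).natDegree) ⊕
        Σ i : Fin m, Fin ((g i.castSucc).natDegree)) → K) (i : Fin m)
      (p : Fin ((g i.castSucc).natDegree + (g (Fin.last m)).natDegree)),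
      T.mulVecLin v ⟨i, p⟩ =
        (g i.castSucc * enc ((g (Fin.last m)).natDegree) (fun q => v (Sum.inl q)) +
          g (Fin.last m) * enc ((g i.castSucc).natDegree) (fun q => v (Sum.inr ⟨i, q⟩))).coeff
          ((g i.castSucc).natDegree + (g (Fin.last m)).natDegree - 1 - (p : ℕ)) := by
    intro v i p
    have hp := p.isLt
    have hdii := hdi i
    rw [Matrix.mulVecLin_apply, Matrix.mulVec, dotProduct, Fintype.sum_sum_type,
      coeff_add, coeff_mul_enc, coeff_mul_enc]
    congr 1
    · refine Finset.sum_congr rfl fun q _ => ?_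
      have hq := q.isLt
      rw [hTA i p q]
      congr 1
      by_cases h1 : (q : ℕ) ≤ (p : ℕ) ∧ (p : ℕ) - (q : ℕ) ≤ (g i.castSucc).natDegree
      · rw [if_pos h1, if_pos (by omega)]
        congr 1
        omega
      · rw [if_neg h1]
        by_cases h2 : (g (Fin.last m)).natDegree - 1 - (q : ℕ) ≤
            (g i.castSucc).natDegree + (g (Fin.last m)).natDegree - 1 - (p : ℕ)
        · rw [if_pos h2, coeff_eq_zero_of_natDegree_lt (by omega)]
        · rw [if_neg h2]
    · rw [← Finset.univ_sigma_univ, Finset.sum_sigma]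
      rw [Finset.sum_eq_single i]
      · refine Finset.sum_congr rfl fun q _ => ?_
        have hq := q.isLt
        rw [hTB i p i q]
        congr 1
        by_cases h1 : (q : ℕ) ≤ (p : ℕ) ∧ (p : ℕ) - (q : ℕ) ≤ (g (Fin.last m)).natDegree
        · rw [if_pos ⟨rfl, h1⟩, if_pos (by omega)]
          congr 1
          omega
        · rw [if_neg (by tauto)]
          by_cases h2 : (g i.castSucc).natDegree - 1 - (q : ℕ) ≤
              (g i.castSucc).natDegree + (g (Fin.last m)).natDegree - 1 - (p : ℕ)
          · rw [if_pos h2, coeff_eq_zero_of_natDegree_lt (by omega)]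
          · rw [if_neg h2]
      · intro j _ hj
        refine Finset.sum_eq_zero fun q _ => ?_
        rw [hTB i p j q, if_neg (fun h => hj h.1.symm), zero_mul]
      · intro h
        exact absurd (Finset.mem_univ i) h
  -- kernel characterization
  have keyIff : ∀ v, v ∈ LinearMap.ker T.mulVecLin ↔ ∀ i : Fin m,
      g i.castSucc * enc ((g (Fin.last m)).natDegree) (fun q => v (Sum.inl q)) +
        g (Fin.last m) * enc ((g i.castSucc).natDegree) (fun q => v (Sum.inr ⟨i, q⟩)) = 0 := by
    intro v
    rw [LinearMap.mem_ker]
    constructor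
    · intro h i
      have hdii := hdi i
      ext n
      rw [coeff_zero]
      by_cases hn : n < (g i.castSucc).natDegree + (g (Fin.last m)).natDegree
      · have hp : (g i.castSucc).natDegree + (g (Fin.last m)).natDegree - 1 - n <
            (g i.castSucc).natDegree + (g (Fin.last m)).natDegree := by omega
        have h' := congrFun h ⟨i, ⟨_, hp⟩⟩
        rw [rowEq v i ⟨_, hp⟩, Pi.zero_apply] at h'
        rw [show (g i.castSucc).natDegree + (g (Fin.last m)).natDegree - 1 -
            (((⟨(g i.castSucc).natDegree + (g (Fin.last m)).natDegree - 1 - n, hp⟩ :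
              Fin ((g i.castSucc).natDegree + (g (Fin.last m)).natDegree))) : ℕ) = n
          by simp; omega] at h'
        exact h'
      · rw [coeff_add, coeff_mul_enc, coeff_mul_enc, Finset.sum_eq_zero, Finset.sum_eq_zero,
          add_zero]
        · intro q _
          have hq := q.isLt
          rw [if_pos (by omega), coeff_eq_zero_of_natDegree_lt (by omega), zero_mul]
        · intro q _
          have hq := q.isLt
          rw [if_pos (by omega), coeff_eq_zero_of_natDegree_lt (by omega), zero_mul]
    · intro h
      funext x
      obtain ⟨i, p⟩ := x
      rw [rowEq v i p, h i, coeff_zero, Pi.zero_apply]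
  have hdegw : ∀ (i : Fin (m + 1)) (w : Polynomial.degreeLT K (Finset.univ.gcd g).natDegree),
      (u i * (w : Polynomial K)).degree < (((g i).natDegree : ℕ) : WithBot ℕ) := by
    intro i w
    rcases eq_or_ne (w : Polynomial K) 0 with h | h
    · rw [h, mul_zero, degree_zero]
      exact_mod_cast WithBot.bot_lt_coe _
    · have hw := Polynomial.mem_degreeLT.1 w.2
      have hw' : (w : Polynomial K).natDegree < (Finset.univ.gcd g).natDegree :=
        (natDegree_lt_iff_degree_lt h).2 hw
      rw [← natDegree_lt_iff_degree_lt (mul_ne_zero (hu0 i) h), natDegree_mul (hu0 i) h,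
        hdeg i]
      omega
  -- the parametrizing linear map
  have Fex : ∃ F : Polynomial.degreeLT K (Finset.univ.gcd g).natDegree →ₗ[K]
      ((Fin ((g (Fin.last m)).natDegree) ⊕ Σ i : Fin m, Fin ((g i.castSucc).natDegree)) → K),
      (∀ w, F w = Sum.elim
        (fun q : Fin ((g (Fin.last m)).natDegree) =>
          (u (Fin.last m) * (w : Polynomial K)).coeff ((g (Fin.last m)).natDegree - 1 - (q : ℕ)))
        (fun x : Σ i : Fin m, Fin ((g i.castSucc).natDegree) =>
          (-(u x.1.castSucc * (w : Polynomial K))).coeff ((g x.1.castSucc).natDegree - 1 - (x.2 : ℕ)))) := by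
    refine ⟨LinearMap.pi fun c => ?_, ?_⟩
    · exact Sum.rec
        (fun q => (lcoeff K ((g (Fin.last m)).natDegree - 1 - (q : ℕ))).comp
          ((LinearMap.mulLeft K (u (Fin.last m))).comp (Submodule.subtype _)))
        (fun x => -((lcoeff K ((g x.1.castSucc).natDegree - 1 - (x.2 : ℕ))).comp
          ((LinearMap.mulLeft K (u x.1.castSucc)).comp (Submodule.subtype _)))) c
    · intro w
      funext c
      cases c with
      | inl q => simp [LinearMap.pi_apply, lcoeff_apply, LinearMap.mulLeft_apply]
      | inr x => simp [LinearMap.pi_apply, lcoeff_apply, LinearMap.mulLeft_apply]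
  obtain ⟨F, hF⟩ := Fex
  have hencF : ∀ w : Polynomial.degreeLT K (Finset.univ.gcd g).natDegree,
      enc ((g (Fin.last m)).natDegree) (fun q => F w (Sum.inl q)) =
        u (Fin.last m) * (w : Polynomial K) := by
    intro w
    have : (fun q : Fin ((g (Fin.last m)).natDegree) => F w (Sum.inl q)) =
        fun q : Fin ((g (Fin.last m)).natDegree) =>
          (u (Fin.last m) * (w : Polynomial K)).coeff
            ((g (Fin.last m)).natDegree - 1 - (q : ℕ)) := by
      funext q; rw [hF w]; rfl
    rw [this]
    exact enc_coeffs _ _ (hdegw (Fin.last m) w)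
  have hencF2 : ∀ (w : Polynomial.degreeLT K (Finset.univ.gcd g).natDegree) (i : Fin m),
      enc ((g i.castSucc).natDegree) (fun q => F w (Sum.inr ⟨i, q⟩)) =
        -(u i.castSucc * (w : Polynomial K)) := by
    intro w i
    have : (fun q : Fin ((g i.castSucc).natDegree) => F w (Sum.inr ⟨i, q⟩)) =
        fun q : Fin ((g i.castSucc).natDegree) =>
          (-(u i.castSucc * (w : Polynomial K))).coeff
            ((g i.castSucc).natDegree - 1 - (q : ℕ)) := by
      funext q; rw [hF w]; rfl
    rw [this]
    refine enc_coeffs _ _ ?_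
    rw [degree_neg]
    exact hdegw i.castSucc w
  have hrange : LinearMap.ker T.mulVecLin = LinearMap.range F := by
    apply le_antisymm
    · -- kernel is contained in the range
      intro v hv
      rw [keyIff] at hv
      set hk : Polynomial K :=
        enc ((g (Fin.last m)).natDegree) (fun q => v (Sum.inl q)) with hhk
      have hdvd : ∀ j : Fin (m + 1), u (Fin.last m) ∣ u j * hk := by
        intro j
        refine Fin.lastCases ?_ ?_ j
        · exact dvd_mul_right _ _
        · intro i
          have h1 : g (Fin.last m) ∣ g i.castSucc * hk :=
            ⟨-(enc ((g i.castSucc).natDegree) (fun q => v (Sum.inr ⟨i, q⟩))),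
              by linear_combination hv i⟩
          rw [hgu i.castSucc, hgu (Fin.last m), mul_assoc] at h1
          exact (mul_dvd_mul_iff_left hG0).1 h1
      have hdvd2 : u (Fin.last m) ∣ hk := by
        have h1 : u (Fin.last m) ∣ Finset.univ.gcd (fun j => u j * hk) :=
          Finset.dvd_gcd fun j _ => hdvd j
        rw [Finset.gcd_mul_right, hgcdu, one_mul] at h1
        exact h1.trans (normalize_dvd_iff.2 dvd_rfl)
      obtain ⟨w, hw⟩ := hdvd2
      have hwdeg : w.degree < (((Finset.univ.gcd g).natDegree : ℕ) : WithBot ℕ) := by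
        rcases eq_or_ne w 0 with h | h
        · rw [h, degree_zero]
          exact_mod_cast WithBot.bot_lt_coe _
        · have hk0 : hk ≠ 0 := hw ▸ mul_ne_zero (hu0 _) h
          have hdk1 : hk.degree < (((g (Fin.last m)).natDegree : ℕ) : WithBot ℕ) :=
            enc_degree_lt _ _
          have h3 : hk.natDegree < (g (Fin.last m)).natDegree :=
            (natDegree_lt_iff_degree_lt hk0).2 hdk1
          rw [hw, natDegree_mul (hu0 _) h] at h3
          have h4 := hdeg (Fin.last m)
          rw [← natDegree_lt_iff_degree_lt h]
          omega
      refine ⟨⟨w, Polynomial.mem_degreeLT.2 hwdeg⟩, ?_⟩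
      funext c
      rw [hF]
      cases c with
      | inl q =>
        simp only [Sum.elim_inl]
        rw [← hw, hhk]
        exact enc_coeff _ _ q
      | inr x =>
        obtain ⟨i, q⟩ := x
        simp only [Sum.elim_inr]
        have hhi : enc ((g i.castSucc).natDegree) (fun q => v (Sum.inr ⟨i, q⟩)) =
            -(u i.castSucc * w) := by
          refine mul_left_cancel₀ (hgne (Fin.last m)) ?_
          linear_combination hv i - g i.castSucc * hw +
            (u i.castSucc * w) * hgu (Fin.last m) - (u (Fin.last m) * w) * hgu i.castSucc
        rw [← hhi]
        exact enc_coeff _ _ q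
    · -- the range is contained in the kernel
      rintro v ⟨w, rfl⟩
      rw [keyIff]
      intro i
      rw [hencF w, hencF2 w i, hgu i.castSucc, hgu (Fin.last m)]
      ring
  have hinj : Function.Injective F := by
    intro a b hab
    apply Subtype.ext
    have h2 : u (Fin.last m) * (a : Polynomial K) = u (Fin.last m) * (b : Polynomial K) := by
      rw [← hencF a, ← hencF b, hab]
    exact mul_left_cancel₀ (hu0 _) h2
  have hrank : Module.finrank K (LinearMap.ker T.mulVecLin) = (Finset.univ.gcd g).natDegree := by
    rw [hrange, LinearMap.finrank_range_of_inj hinj]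
    rw [(Polynomial.degreeLTEquiv K _).finrank_eq]
    simp
  refine ⟨hrank, ?_⟩
  have h2 : (∃ x : AlgebraicClosure K, ∀ i, Polynomial.aeval x (g i) = 0) ↔
      (Finset.univ.gcd g).natDegree ≠ 0 := by
    constructor
    · rintro ⟨x, hx⟩ h0
      have hroot : (aeval x) (Finset.univ.gcd g) = 0 :=
        aeval_finset_gcd x _ g fun i _ => hx i
      obtain ⟨c, hc⟩ := Polynomial.natDegree_eq_zero.1 h0
      rw [← hc, aeval_C] at hroot
      have hc0 : c ≠ 0 := fun h => hG0 (by rw [← hc, h, map_zero])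
      exact hc0 ((map_eq_zero_iff _ (algebraMap K (AlgebraicClosure K)).injective).1 hroot)
    · intro h0
      have hne : ((Finset.univ.gcd g).map (algebraMap K (AlgebraicClosure K))).degree ≠ 0 := by
        rw [degree_map, degree_eq_natDegree hG0]
        exact_mod_cast h0
      obtain ⟨x, hx⟩ := IsAlgClosed.exists_root
        ((Finset.univ.gcd g).map (algebraMap K (AlgebraicClosure K))) hne
      refine ⟨x, fun i => ?_⟩
      have hxg : (aeval x) (Finset.univ.gcd g) = 0 := by
        rwa [aeval_def, ← eval_map]
      rw [hgu i, map_mul, hxg, zero_mul]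
  rw [h2, ← hrank]
  exact not_congr Submodule.finrank_eq_zero
end
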